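/- Let G be a directed graph on a finite vertex set and let d, y, x, w, o be pairwise distinct vertices such that o has no incoming edges. Let P be a path from d to w on which y appears as an interior non-collider. If P is not blocked by {x, o}, then at least one of the following holds: (a) the initial segment of P from d to y is not blocked by {x, w, o} and the edge of P joining y to its neighbour on that segment is directed out of y; (b) x is a descendant of y; (c) w is a descendant of y. -/
import Mathlib


/-! ## Directed graphs, paths, d-separation -/

namespace DeltaSwig

variable {V : Type*}

/-- `b` is a descendant of `a`: reachable from `a` by a nonempty directed path. -/
def Descendant (E : V → V → Prop) (a b : V) : Prop := Relation.TransGen E a b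

/-- A directed graph is a DAG if no vertex is related to itself by the
transitive closure of the edge relation. -/
def IsDAG (E : V → V → Prop) : Prop := ∀ v : V, ¬ Relation.TransGen E v v

/-- A path of length `k ≥ 1` between `v 0` and `v k`: pairwise distinct vertices,
consecutive vertices joined by an edge in either direction. -/
structure IsPath (E : V → V → Prop) (k : ℕ) (v : ℕ → V) : Prop where
  one_le : 1 ≤ k
  inj : ∀ i ≤ k, ∀ j ≤ k, v i = v j → i = j
  adj : ∀ i < k, E (v i) (v (i + 1)) ∨ E (v (i + 1)) (v i)

/-- The interior vertex `v j` is a collider on the path `v`. -/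
def IsCollider (E : V → V → Prop) (v : ℕ → V) (j : ℕ) : Prop :=
  E (v (j - 1)) (v j) ∧ E (v (j + 1)) (v j)

/-- The path `v` (of length `k`) is blocked by the set `Z`. -/
def Blocked (E : V → V → Prop) (k : ℕ) (v : ℕ → V) (Z : Set V) : Prop :=
  ∃ j, 0 < j ∧ j < k ∧
    ((¬ IsCollider E v j ∧ v j ∈ Z) ∨
      (IsCollider E v j ∧ v j ∉ Z ∧ ∀ w, Descendant E (v j) w → w ∉ Z))

/-- `X` and `Y` are d-separated by `Z`: every path from a vertex of `X` to a
vertex of `Y` is blocked by `Z`. -/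
def DSep (E : V → V → Prop) (X Y Z : Set V) : Prop :=
  ∀ (k : ℕ) (v : ℕ → V), IsPath E k v → v 0 ∈ X → v k ∈ Y → Blocked E k v Z

/-- Restriction of an edge relation to a set of kept vertices (vertex deletion). -/
def restrictEdge (E : V → V → Prop) (K : Set V) : V → V → Prop :=
  fun a b => E a b ∧ a ∈ K ∧ b ∈ K

/-- The parents of a vertex. -/
def parents (E : V → V → Prop) (v : V) : Set V := {w | E w v}

end DeltaSwig

namespace DeltaSwig

/-- **Lemma C.1 on post-treatment controls, path case analysis.**
Let `P` be a path `v` from `d` to `w` of length `k` on which `y = v i`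
(`0 < i < k`) appears as an interior non-collider, and suppose `o` has no
incoming edges. If `P` is not blocked by `{x, o}`, then either (a) the initial
segment of `P` from `d` to `y` is not blocked by `{x, w, o}` and the edge of
`P` joining `y` to its neighbour on that segment is directed out of `y`, or
(b) `x` is a descendant of `y`, or (c) `w` is a descendant of `y`. -/
private lemma chain_desc {V : Type*} (E : V → V → Prop) (v : ℕ → V) (i : ℕ) :
    ∀ n, (∀ j, i ≤ j → j < n → E (v j) (v (j+1))) → i < n →
    Relation.TransGen E (v i) (v n) := by
  intro n
  induction n with
  | zero => intro _ h; omega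
  | succ n ih =>
    intro h hin
    rcases Nat.lt_or_ge i n with h' | h'
    · exact (ih (fun j hj hjn => h j hj (by omega)) h').tail (h n (by omega) (by omega))
    · have : i = n := by omega
      subst this
      exact Relation.TransGen.single (h i le_rfl (by omega))

private lemma not_trans_to {V : Type*} (E : V → V → Prop) (o : V)
    (ho : ∀ a, ¬ E a o) (a : V) : ¬ Relation.TransGen E a o := by
  intro h
  cases h with
  | single h => exact ho _ h
  | tail _ h => exact ho _ h

theorem path_through_noncollider
    {V : Type*} [Finite V] (E : V → V → Prop)
    (d y x w o : V)
    (hdist : List.Pairwise (· ≠ ·) [d, y, x, w, o])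
    (ho : ∀ a, ¬ E a o)
    (k : ℕ) (v : ℕ → V) (hP : IsPath E k v) (hd : v 0 = d) (hw : v k = w)
    (i : ℕ) (hi0 : 0 < i) (hik : i < k) (hy : v i = y)
    (hnc : ¬ IsCollider E v i)
    (hnb : ¬ Blocked E k v {x, o}) :
    (¬ Blocked E i v {x, w, o} ∧ E (v i) (v (i - 1))) ∨
      Descendant E y x ∨ Descendant E y w := by
    classical
  by_cases hfwd : E (v i) (v (i+1))
  · -- edge out of y toward w-side
    right
    have key : ∀ n, n ≤ k →
        Descendant E y x ∨ (∀ j, i ≤ j → j < n → E (v j) (v (j+1))) := by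
      intro n
      induction n with
      | zero => intro _; right; intro j hj hjn; omega
      | succ n ih =>
        intro hnk
        rcases Nat.lt_or_ge n i with hni | hni
        · right; intro j hj hjn; omega
        · rcases ih (by omega) with hx | hchain
          · exact Or.inl hx
          · by_cases he : E (v n) (v (n+1))
            · right; intro j hj hjn
              rcases Nat.lt_or_ge j n with h' | h'
              · exact hchain j hj h'
              · have : j = n := by omega
                subst this; exact he
            · have hback : E (v (n+1)) (v n) := (hP.adj n (by omega)).resolve_left he
              have hni' : i < n := by
                rcases Nat.lt_or_ge i n with h'' | h''
                · exact h''
                · exfalso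
                  have : i = n := by omega
                  subst this; exact he hfwd
              have hleft : E (v (n-1)) (v n) := by
                have := hchain (n-1) (by omega) (by omega)
                have heq : n - 1 + 1 = n := by omega
                rwa [heq] at this
              have hcol : IsCollider E v n := ⟨hleft, hback⟩
              have hyd : Descendant E y (v n) := by
                rw [← hy]; exact chain_desc E v i n hchain hni'
              rcases Classical.em (v n ∈ ({x, o} : Set V)) with hmem | hmem
              · rcases hmem with h | h
                · left; rw [← h]; exact hyd
                · exact absurd hleft (by rw [show v n = o from h]; exact ho _)
              · have hex : ∃ u, Descendant E (v n) u ∧ u ∈ ({x, o} : Set V) := by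
                  by_contra hno
                  push_neg at hno
                  exact hnb ⟨n, by omega, by omega,
                    Or.inr ⟨hcol, hmem, fun u hu => hno u hu⟩⟩
                obtain ⟨u, hu, hum⟩ := hex
                rcases hum with h | h
                · left; rw [← h]; exact hyd.trans hu
                · exact absurd (by rw [show u = o from h] at hu; exact hu)
                    (not_trans_to E o ho _)
    rcases key k le_rfl with hx | hchain
    · exact Or.inl hx
    · right
      rw [← hy, ← hw]
      exact chain_desc E v i k hchain hik
  · -- edge out of y toward d-side
    left
    have hback : E (v (i+1)) (v i) := (hP.adj i hik).resolve_left hfwd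
    have hout : E (v i) (v (i-1)) := by
      have hnl : ¬ E (v (i-1)) (v i) := fun h => hnc ⟨h, hback⟩
      have hadj := hP.adj (i-1) (by omega)
      have heq : i - 1 + 1 = i := by omega
      rw [heq] at hadj
      exact hadj.resolve_left hnl
    refine ⟨?_, hout⟩
    intro hB
    obtain ⟨j, hj0, hji, hcase⟩ := hB
    rcases hcase with ⟨hncj, hmem⟩ | ⟨hcj, hnmem, hnd⟩
    · rcases hmem with h | h | h
      · exact hnb ⟨j, hj0, by omega, Or.inl ⟨hncj, Or.inl h⟩⟩
      · have : j = k := hP.inj j (by omega) k le_rfl (by rw [h, hw])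
        omega
      · exact hnb ⟨j, hj0, by omega, Or.inl ⟨hncj, Or.inr h⟩⟩
    · refine hnb ⟨j, hj0, by omega, Or.inr ⟨hcj, ?_, ?_⟩⟩
      · intro hm
        apply hnmem
        rcases hm with h | h
        · exact Or.inl h
        · exact Or.inr (Or.inr h)
      · intro u hu hm
        apply hnd u hu
        rcases hm with h | h
        · exact Or.inl h
        · exact Or.inr (Or.inr h)

end DeltaSwig
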